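/- Suppose γ* ∈ U(a,b) minimizes the transport cost C(γ) = Σᵢⱼ γᵢⱼ‖xᵢ − yⱼ‖² over U(a,b), and let T*(xᵢ) = Σⱼ (γ*ᵢⱼ/aᵢ) yⱼ. Then the deterministic coupling γ̂* defined by γ̂*ᵢₚ = aᵢ if p = i and 0 otherwise minimizes Ĉ(γ̂) = Σᵢₚ γ̂ᵢₚ‖xᵢ − T*(xₚ)‖² over γ̂ ∈ U(a,a); i.e., W₂²(ν, T*_#ν) = Σᵢ aᵢ‖xᵢ − T*(xᵢ)‖². -/

import Mathlib

open scoped BigOperators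

/-- `γ` is a coupling of the weight vectors `a` and `b`: nonnegative entries,
row sums `a`, column sums `b`. -/
def IsCoupling {n m : ℕ} (a : Fin n → ℝ) (b : Fin m → ℝ) (γ : Fin n → Fin m → ℝ) : Prop :=
  (∀ i j, 0 ≤ γ i j) ∧ (∀ i, ∑ j, γ i j = a i) ∧ (∀ j, ∑ i, γ i j = b j)

/-- Squared 2-Wasserstein distance between the finitely supported measures
`∑ i, a i • δ (x i)` and `∑ j, b j • δ (y j)`: the minimum quadratic transport
cost over couplings. -/
noncomputable def W2sq {n m d : ℕ} (a : Fin n → ℝ) (b : Fin m → ℝ)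
    (x : Fin n → EuclideanSpace ℝ (Fin d)) (y : Fin m → EuclideanSpace ℝ (Fin d)) : ℝ :=
  sInf { c | ∃ γ : Fin n → Fin m → ℝ, IsCoupling a b γ ∧
    c = ∑ i, ∑ j, γ i j * ‖x i - y j‖ ^ 2 }

/-- Expansion of a weighted sum of squared distances around a point `v` that is the
barycenter in the sense that `∑ j, c j • (v - y j) = 0`. -/
lemma sum_sq_expand {d m : ℕ} (y : Fin m → EuclideanSpace ℝ (Fin d))
    (c : Fin m → ℝ) (u v : EuclideanSpace ℝ (Fin d))
    (h0 : (∑ j, c j • (v - y j)) = 0) :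
    ∑ j, c j * ‖u - y j‖ ^ 2 = (∑ j, c j) * ‖u - v‖ ^ 2 + ∑ j, c j * ‖v - y j‖ ^ 2 := by
  have hpt : ∀ j, ‖u - y j‖ ^ 2
      = ‖u - v‖ ^ 2 + 2 * (inner ℝ (u - v) (v - y j) : ℝ) + ‖v - y j‖ ^ 2 := by
    intro j
    have := @norm_add_sq_real (EuclideanSpace ℝ (Fin d)) _ _ (u - v) (v - y j)
    simpa [sub_add_sub_cancel] using this
  have hmid : ∑ j, c j * (2 * (inner ℝ (u - v) (v - y j) : ℝ)) = 0 := by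
    have h1 : ∑ j, (inner ℝ (u - v) (c j • (v - y j)) : ℝ) = 0 := by
      rw [← inner_sum, h0, inner_zero_right]
    calc ∑ j, c j * (2 * (inner ℝ (u - v) (v - y j) : ℝ))
        = 2 * ∑ j, (inner ℝ (u - v) (c j • (v - y j)) : ℝ) := by
          rw [Finset.mul_sum]; refine Finset.sum_congr rfl fun j _ => ?_
          rw [real_inner_smul_right]; ring
      _ = 0 := by rw [h1, mul_zero]
  calc ∑ j, c j * ‖u - y j‖ ^ 2
      = ∑ j, (c j * ‖u - v‖ ^ 2 + c j * (2 * (inner ℝ (u - v) (v - y j) : ℝ))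
          + c j * ‖v - y j‖ ^ 2) := by
        refine Finset.sum_congr rfl fun j _ => ?_; rw [hpt j]; ring
    _ = (∑ j, c j) * ‖u - v‖ ^ 2 + ∑ j, c j * (2 * (inner ℝ (u - v) (v - y j) : ℝ))
          + ∑ j, c j * ‖v - y j‖ ^ 2 := by
        rw [Finset.sum_add_distrib, Finset.sum_add_distrib, Finset.sum_mul]
    _ = (∑ j, c j) * ‖u - v‖ ^ 2 + ∑ j, c j * ‖v - y j‖ ^ 2 := by rw [hmid]; ring

theorem identity_coupling_optimal_for_projection {n m d : ℕ}
    (a : Fin n → ℝ) (b : Fin m → ℝ)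
    (x : Fin n → EuclideanSpace ℝ (Fin d)) (y : Fin m → EuclideanSpace ℝ (Fin d))
    (ha : ∀ i, 0 < a i) (hasum : ∑ i, a i = 1)
    (hb : ∀ j, 0 ≤ b j) (hbsum : ∑ j, b j = 1)
    (γstar : Fin n → Fin m → ℝ) (hγstar : IsCoupling a b γstar)
    (hopt : ∀ γ : Fin n → Fin m → ℝ, IsCoupling a b γ →
      ∑ i, ∑ j, γstar i j * ‖x i - y j‖ ^ 2 ≤ ∑ i, ∑ j, γ i j * ‖x i - y j‖ ^ 2)
    (Tstar : Fin n → EuclideanSpace ℝ (Fin d))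
    (hTstar : ∀ i, Tstar i = ∑ j, (γstar i j / a i) • y j) :
    (∀ γhat : Fin n → Fin n → ℝ, IsCoupling a a γhat →
      ∑ i, a i * ‖x i - Tstar i‖ ^ 2 ≤ ∑ i, ∑ p, γhat i p * ‖x i - Tstar p‖ ^ 2) ∧
    W2sq a a x Tstar = ∑ i, a i * ‖x i - Tstar i‖ ^ 2 := by
  obtain ⟨hγpos, hγrow, hγcol⟩ := hγstar
  have hane : ∀ i, a i ≠ 0 := fun i => (ha i).ne'
  -- barycenter property
  have hzero : ∀ p, (∑ j, γstar p j • (Tstar p - y j)) = 0 := by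
    intro p
    simp only [smul_sub]
    rw [Finset.sum_sub_distrib, ← Finset.sum_smul, hγrow p, sub_eq_zero, hTstar p,
      Finset.smul_sum]
    refine Finset.sum_congr rfl fun j _ => ?_
    rw [smul_smul, mul_comm, div_mul_cancel₀ _ (hane p)]
  have hzero' : ∀ p, (∑ j, (γstar p j / a p) • (Tstar p - y j)) = 0 := by
    intro p
    have : ∑ j, (γstar p j / a p) • (Tstar p - y j)
        = (a p)⁻¹ • ∑ j, γstar p j • (Tstar p - y j) := by
      rw [Finset.smul_sum]
      refine Finset.sum_congr rfl fun j _ => ?_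
      rw [smul_smul, div_eq_inv_mul]
    rw [this, hzero p, smul_zero]
  -- cost identity for γstar
  set D : ℝ := ∑ p, ∑ j, γstar p j * ‖Tstar p - y j‖ ^ 2 with hD
  have hcoststar : ∑ i, ∑ j, γstar i j * ‖x i - y j‖ ^ 2
      = (∑ i, a i * ‖x i - Tstar i‖ ^ 2) + D := by
    rw [hD, ← Finset.sum_add_distrib]
    refine Finset.sum_congr rfl fun i _ => ?_
    rw [sum_sq_expand y (γstar i) (x i) (Tstar i) (hzero i), hγrow i]
  -- the main inequality
  have main : ∀ γhat : Fin n → Fin n → ℝ, IsCoupling a a γhat →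
      ∑ i, a i * ‖x i - Tstar i‖ ^ 2 ≤ ∑ i, ∑ p, γhat i p * ‖x i - Tstar p‖ ^ 2 := by
    intro γhat ⟨hhpos, hhrow, hhcol⟩
    set γ' : Fin n → Fin m → ℝ := fun i j => ∑ p, γhat i p * (γstar p j / a p) with hγ'
    have hcoup' : IsCoupling a b γ' := by
      refine ⟨fun i j => Finset.sum_nonneg fun p _ => ?_, fun i => ?_, fun j => ?_⟩
      · exact mul_nonneg (hhpos i p) (div_nonneg (hγpos p j) (ha p).le)
      · rw [hγ']
        calc ∑ j, ∑ p, γhat i p * (γstar p j / a p)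
            = ∑ p, ∑ j, γhat i p * (γstar p j / a p) := Finset.sum_comm
          _ = ∑ p, γhat i p := by
              refine Finset.sum_congr rfl fun p _ => ?_
              rw [← Finset.mul_sum, ← Finset.sum_div, hγrow p, div_self (hane p), mul_one]
          _ = a i := hhrow i
      · rw [hγ']
        calc ∑ i, ∑ p, γhat i p * (γstar p j / a p)
            = ∑ p, (∑ i, γhat i p) * (γstar p j / a p) := by
              rw [Finset.sum_comm]
              exact Finset.sum_congr rfl fun p _ => (Finset.sum_mul ..).symm
          _ = ∑ p, γstar p j := by
              refine Finset.sum_congr rfl fun p _ => ?_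
              rw [hhcol p, mul_div_cancel₀ _ (hane p)]
          _ = b j := hγcol j
    have hcost' : ∑ i, ∑ j, γ' i j * ‖x i - y j‖ ^ 2
        = (∑ i, ∑ p, γhat i p * ‖x i - Tstar p‖ ^ 2) + D := by
      have hrowsum : ∀ p, ∑ j, γstar p j / a p = 1 := by
        intro p; rw [← Finset.sum_div, hγrow p, div_self (hane p)]
      have step1 : ∀ i, ∑ j, γ' i j * ‖x i - y j‖ ^ 2
          = ∑ p, γhat i p * (‖x i - Tstar p‖ ^ 2 + ∑ j, (γstar p j / a p) * ‖Tstar p - y j‖ ^ 2) := by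
        intro i
        calc ∑ j, γ' i j * ‖x i - y j‖ ^ 2
            = ∑ p, ∑ j, γhat i p * ((γstar p j / a p) * ‖x i - y j‖ ^ 2) := by
              rw [Finset.sum_comm]
              refine Finset.sum_congr rfl fun j _ => ?_
              rw [hγ', Finset.sum_mul]
              exact Finset.sum_congr rfl fun p _ => by ring
          _ = ∑ p, γhat i p * ∑ j, (γstar p j / a p) * ‖x i - y j‖ ^ 2 := by
              refine Finset.sum_congr rfl fun p _ => (Finset.mul_sum ..).symm
          _ = ∑ p, γhat i p * (‖x i - Tstar p‖ ^ 2 + ∑ j, (γstar p j / a p) * ‖Tstar p - y j‖ ^ 2) := by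
              refine Finset.sum_congr rfl fun p _ => ?_
              rw [sum_sq_expand y (fun j => γstar p j / a p) (x i) (Tstar p) (hzero' p),
                hrowsum p, one_mul]
      calc ∑ i, ∑ j, γ' i j * ‖x i - y j‖ ^ 2
          = ∑ i, (∑ p, γhat i p * ‖x i - Tstar p‖ ^ 2
              + ∑ p, γhat i p * ∑ j, (γstar p j / a p) * ‖Tstar p - y j‖ ^ 2) := by
            refine Finset.sum_congr rfl fun i _ => ?_
            rw [step1 i, ← Finset.sum_add_distrib]
            exact Finset.sum_congr rfl fun p _ => by ring
        _ = (∑ i, ∑ p, γhat i p * ‖x i - Tstar p‖ ^ 2)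
              + ∑ i, ∑ p, γhat i p * ∑ j, (γstar p j / a p) * ‖Tstar p - y j‖ ^ 2 :=
            Finset.sum_add_distrib
        _ = (∑ i, ∑ p, γhat i p * ‖x i - Tstar p‖ ^ 2) + D := by
            congr 1
            rw [Finset.sum_comm, hD]
            refine Finset.sum_congr rfl fun p _ => ?_
            rw [← Finset.sum_mul, hhcol p, Finset.mul_sum]
            refine Finset.sum_congr rfl fun j _ => ?_
            rw [← mul_assoc, mul_div_cancel₀ _ (hane p)]
    have := hopt γ' hcoup'
    rw [hcoststar, hcost'] at this
    linarith
  refine ⟨main, ?_⟩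
  -- identity coupling
  set γid : Fin n → Fin n → ℝ := fun i p => if p = i then a i else 0 with hγid
  have hidcoup : IsCoupling a a γid := by
    refine ⟨fun i p => ?_, fun i => ?_, fun p => ?_⟩
    · rw [hγid]; dsimp only; split <;> [exact (ha i).le; rfl]
    · simp [hγid]
    · simp [hγid, Finset.sum_ite_eq]
  have hidcost : ∑ i, ∑ p, γid i p * ‖x i - Tstar p‖ ^ 2
      = ∑ i, a i * ‖x i - Tstar i‖ ^ 2 := by
    refine Finset.sum_congr rfl fun i _ => ?_
    simp [hγid, Finset.sum_ite_eq', ite_mul]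
  have hmem : (∑ i, a i * ‖x i - Tstar i‖ ^ 2)
      ∈ { c | ∃ γ : Fin n → Fin n → ℝ, IsCoupling a a γ ∧
        c = ∑ i, ∑ p, γ i p * ‖x i - Tstar p‖ ^ 2 } :=
    ⟨γid, hidcoup, hidcost.symm⟩
  have hbdd : ∀ c ∈ { c | ∃ γ : Fin n → Fin n → ℝ, IsCoupling a a γ ∧
      c = ∑ i, ∑ p, γ i p * ‖x i - Tstar p‖ ^ 2 },
      (∑ i, a i * ‖x i - Tstar i‖ ^ 2) ≤ c := by
    rintro c ⟨γ, hγ, rfl⟩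
    exact main γ hγ
  exact le_antisymm (csInf_le ⟨_, hbdd⟩ hmem) (le_csInf ⟨_, hmem⟩ hbdd)
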